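/- The map that deletes the last symbol gives a bijection between the set of permutations of [n] avoiding {3214, 3241, 4213, 4231} whose last entry is n, and the set of permutations of [n-1] avoiding 321. -/

import Mathlib

def Contains {n k : ℕ} (σ : Equiv.Perm (Fin n)) (τ : Fin k → ℕ) : Prop :=
  ∃ f : Fin k → Fin n, StrictMono f ∧ ∀ a b : Fin k, τ a < τ b ↔ σ (f a) < σ (f b)

def AvoidsT1 {n : ℕ} (σ : Equiv.Perm (Fin n)) : Prop :=
  ¬ Contains σ ![2,1,0,3] ∧ ¬ Contains σ ![2,1,3,0] ∧
  ¬ Contains σ ![3,1,0,2] ∧ ¬ Contains σ ![3,1,2,0]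

private def restrictLast {n : ℕ} (σ : Equiv.Perm (Fin (n+1)))
    (h : σ (Fin.last n) = Fin.last n) : Equiv.Perm (Fin n) where
  toFun i := (σ i.castSucc).castPred
    (fun he => (Fin.castSucc_lt_last i).ne (σ.injective (he.trans h.symm)))
  invFun i := (σ.symm i.castSucc).castPred
    (fun he => (Fin.castSucc_lt_last i).ne
      (σ.symm.injective (he.trans ((Equiv.symm_apply_eq σ).mpr h.symm).symm)))
  left_inv i := by simp
  right_inv i := by simp

private lemma restrictLast_eq {n : ℕ} (σ : Equiv.Perm (Fin (n+1)))
    (h : σ (Fin.last n) = Fin.last n) (i : Fin n) :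
    σ i.castSucc = ((restrictLast σ h) i).castSucc := by
  simp [restrictLast]

private def extendLast {n : ℕ} (π : Equiv.Perm (Fin n)) : Equiv.Perm (Fin (n+1)) where
  toFun := Fin.lastCases (Fin.last n) (fun i => (π i).castSucc)
  invFun := Fin.lastCases (Fin.last n) (fun i => (π.symm i).castSucc)
  left_inv i := by induction i using Fin.lastCases <;> simp
  right_inv i := by induction i using Fin.lastCases <;> simp

@[simp] private lemma extendLast_last {n : ℕ} (π : Equiv.Perm (Fin n)) :
    extendLast π (Fin.last n) = Fin.last n := by
  simp [extendLast]

@[simp] private lemma extendLast_castSucc {n : ℕ} (π : Equiv.Perm (Fin n)) (i : Fin n) :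
    extendLast π i.castSucc = (π i).castSucc := by
  simp [extendLast]

private lemma restrict_extend {n : ℕ} (π : Equiv.Perm (Fin n)) :
    restrictLast (extendLast π) (extendLast_last π) = π := by
  ext i
  have := restrictLast_eq (extendLast π) (extendLast_last π) i
  rw [extendLast_castSucc] at this
  exact congrArg Fin.val (Fin.castSucc_injective n this).symm

private lemma extend_restrict {n : ℕ} (σ : Equiv.Perm (Fin (n+1)))
    (h : σ (Fin.last n) = Fin.last n) : extendLast (restrictLast σ h) = σ := by
  ext i
  induction i using Fin.lastCases with
  | last => simp [h]
  | cast i => rw [extendLast_castSucc, ← restrictLast_eq]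

private lemma contains321_iff {m : ℕ} (π : Equiv.Perm (Fin m)) :
    Contains π ![2,1,0] ↔ ∃ a b c : Fin m, a < b ∧ b < c ∧ π c < π b ∧ π b < π a := by
  constructor
  · rintro ⟨f, hf, hp⟩
    exact ⟨f 0, f 1, f 2, hf (by decide), hf (by decide),
      (hp 2 1).mp (by decide), (hp 1 0).mp (by norm_num)⟩
  · rintro ⟨a, b, c, hab, hbc, h1, h2⟩
    have h1' := Fin.lt_def.mp h1
    have h2' := Fin.lt_def.mp h2
    refine ⟨![a,b,c], ?_, ?_⟩
    · rw [Fin.strictMono_iff_lt_succ]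
      intro i; fin_cases i <;> simpa
    · intro i j
      match i, j with
      | 0, 0 | 0, 1 | 0, 2 | 1, 0 | 1, 1 | 1, 2 | 2, 0 | 2, 1 | 2, 2 =>
        simp only [Matrix.cons_val_zero, Matrix.cons_val_one, Matrix.head_cons,
          Matrix.cons_val_two, Matrix.tail_cons, Fin.lt_def]
        omega

/-- A descending triple in `σ` (which fixes the last point) gives a `321` in the restriction. -/
private lemma triple_to_321 {n : ℕ} (σ : Equiv.Perm (Fin (n+1)))
    (h : σ (Fin.last n) = Fin.last n) {a b c : Fin (n+1)}
    (hab : a < b) (hbc : b < c) (h1 : σ c < σ b) (h2 : σ b < σ a) :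
    Contains (restrictLast σ h) ![2,1,0] := by
  have hc : c ≠ Fin.last n := by
    intro hc
    rw [hc, h] at h1
    exact absurd (Fin.le_last (σ b)) (not_le.mpr h1)
  have hcl : c < Fin.last n := Fin.lt_last_iff_ne_last.mpr hc
  have hbl : b < Fin.last n := hbc.trans hcl
  have hal : a < Fin.last n := hab.trans hbl
  set π := restrictLast σ h
  rw [contains321_iff]
  refine ⟨a.castPred hal.ne, b.castPred hbl.ne, c.castPred hcl.ne, ?_, ?_, ?_, ?_⟩
  · rwa [← Fin.castSucc_lt_castSucc_iff, Fin.castSucc_castPred, Fin.castSucc_castPred]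
  · rwa [← Fin.castSucc_lt_castSucc_iff, Fin.castSucc_castPred, Fin.castSucc_castPred]
  · rw [← Fin.castSucc_lt_castSucc_iff, ← restrictLast_eq, ← restrictLast_eq,
      Fin.castSucc_castPred, Fin.castSucc_castPred]; exact h1
  · rw [← Fin.castSucc_lt_castSucc_iff, ← restrictLast_eq, ← restrictLast_eq,
      Fin.castSucc_castPred, Fin.castSucc_castPred]; exact h2

private lemma avoids_iff {n : ℕ} (σ : Equiv.Perm (Fin (n+1)))
    (h : σ (Fin.last n) = Fin.last n) :
    AvoidsT1 σ ↔ ¬ Contains (restrictLast σ h) ![2,1,0] := by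
  set π := restrictLast σ h with hπ
  constructor
  · -- AvoidsT1 σ → ¬ 321 in π : contrapositive, 321 in π gives 3214 in σ
    intro hA hC
    rw [contains321_iff] at hC
    obtain ⟨a, b, c, hab, hbc, h1, h2⟩ := hC
    apply hA.1
    have key : ∀ x : Fin n, σ x.castSucc = (π x).castSucc := fun x => restrictLast_eq σ h x
    have h1' : σ c.castSucc < σ b.castSucc := by
      rw [key, key]; exact Fin.castSucc_lt_castSucc_iff.mpr h1
    have h2' : σ b.castSucc < σ a.castSucc := by
      rw [key, key]; exact Fin.castSucc_lt_castSucc_iff.mpr h2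
    have hlt : ∀ x : Fin n, σ x.castSucc < σ (Fin.last n) := by
      intro x; rw [h, key]; exact Fin.castSucc_lt_last _
    refine ⟨![a.castSucc, b.castSucc, c.castSucc, Fin.last n], ?_, ?_⟩
    · rw [Fin.strictMono_iff_lt_succ]
      intro i; fin_cases i <;>
        simp [show Fin.castSucc (2:Fin 3) = (2:Fin 4) from rfl,
          show Fin.castSucc (0:Fin 3) = (0:Fin 4) from rfl,
          show Fin.castSucc (1:Fin 3) = (1:Fin 4) from rfl,
          show Fin.succ (2:Fin 3) = (3:Fin 4) from rfl,
          show Fin.succ (0:Fin 3) = (1:Fin 4) from rfl,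
          show Fin.succ (1:Fin 3) = (2:Fin 4) from rfl,
          Fin.castSucc_lt_castSucc_iff, Fin.castSucc_lt_last, hab, hbc]
    · have ha' := Fin.lt_def.mp h1'
      have hb' := Fin.lt_def.mp h2'
      have hc' := Fin.lt_def.mp (hlt a)
      have hd' := Fin.lt_def.mp (hlt b)
      have he' := Fin.lt_def.mp (hlt c)
      intro i j
      match i, j with
      | 0, 0 | 0, 1 | 0, 2 | 0, 3 | 1, 0 | 1, 1 | 1, 2 | 1, 3
      | 2, 0 | 2, 1 | 2, 2 | 2, 3 | 3, 0 | 3, 1 | 3, 2 | 3, 3 =>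
        simp only [Matrix.cons_val_zero, Matrix.cons_val_one, Matrix.head_cons,
          Matrix.cons_val_two, Matrix.cons_val_three, Matrix.tail_cons, Fin.lt_def]
        omega
  · -- ¬ 321 in π → AvoidsT1 σ
    intro hC
    refine ⟨?_, ?_, ?_, ?_⟩ <;> rintro ⟨f, hf, hp⟩ <;> apply hC
    · exact triple_to_321 σ h (hf (show (0:Fin 4) < 1 by decide))
        (hf (show (1:Fin 4) < 2 by decide))
        ((hp 2 1).mp (by decide)) ((hp 1 0).mp (by norm_num))
    · exact triple_to_321 σ h (hf (show (0:Fin 4) < 1 by decide))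
        (hf (show (1:Fin 4) < 3 by decide))
        ((hp 3 1).mp (by decide)) ((hp 1 0).mp (by norm_num))
    · exact triple_to_321 σ h (hf (show (0:Fin 4) < 1 by decide))
        (hf (show (1:Fin 4) < 2 by decide))
        ((hp 2 1).mp (by decide)) ((hp 1 0).mp (by norm_num))
    · exact triple_to_321 σ h (hf (show (0:Fin 4) < 1 by decide))
        (hf (show (1:Fin 4) < 3 by decide))
        ((hp 3 1).mp (by decide)) ((hp 1 0).mp (by norm_num))

/-- Deleting the last symbol is a bijection between permutations of `[n+1]`
avoiding `T₁ = {3214, 3241, 4213, 4231}` ending with the maximum symbol, and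
permutations of `[n]` avoiding `321`. -/
theorem delete_last_bijection_T1 (n : ℕ) (hn : 1 ≤ n) :
    ∃ e : {σ : Equiv.Perm (Fin (n + 1)) // σ (Fin.last n) = Fin.last n ∧ AvoidsT1 σ} ≃
          {π : Equiv.Perm (Fin n) // ¬ Contains π ![2,1,0]},
      ∀ (σ : {σ : Equiv.Perm (Fin (n + 1)) // σ (Fin.last n) = Fin.last n ∧ AvoidsT1 σ})
        (i : Fin n),
        (((e σ : Equiv.Perm (Fin n)) i : ℕ)) =
          (((σ : Equiv.Perm (Fin (n + 1))) i.castSucc : ℕ)) := by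
  refine ⟨⟨fun s => ⟨restrictLast s.1 s.2.1, (avoids_iff s.1 s.2.1).mp s.2.2⟩,
    fun t => ⟨extendLast t.1, extendLast_last t.1, ?_⟩, ?_, ?_⟩, ?_⟩
  · rw [avoids_iff (extendLast t.1) (extendLast_last t.1), restrict_extend]
    exact t.2
  · rintro ⟨σ, hσ1, hσ2⟩
    exact Subtype.ext (extend_restrict σ hσ1)
  · rintro ⟨π, hπ⟩
    exact Subtype.ext (restrict_extend π)
  · rintro ⟨σ, hσ1, hσ2⟩ i
    exact (congrArg Fin.val (restrictLast_eq σ hσ1 i)).symm
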